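/- Every over-relaxation is at least as good as the corresponding under-relaxation: for every t ∈ [0, 1], the superoperator A(1−t) − A(1+t) is positive semidefinite, i.e., ⟨X, A(1−t)(X)⟩ ≥ ⟨X, A(1+t)(X)⟩ for every n×n matrix X; consequently λ_max(A(1−t)) ≥ λ_max(A(1+t)). -/

import Mathlib

open Matrix

private lemma trace_tm_self_nonneg {n : ℕ} (D : Matrix (Fin n) (Fin n) ℝ) :
    0 ≤ (Dᵀ * D).trace := by
  rw [Matrix.trace]
  refine Finset.sum_nonneg fun j _ => ?_
  simp only [Matrix.diag_apply, Matrix.mul_apply, Matrix.transpose_apply]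
  exact Finset.sum_nonneg fun i _ => mul_self_nonneg _

private lemma expand_trace {n : ℕ} (Q X : Matrix (Fin n) (Fin n) ℝ) (ω : ℝ) :
    (Xᵀ * ((1 - ω • Q) * X * (1 - ω • Q))).trace
      = (Xᵀ * X).trace - ω * (Xᵀ * (Q * X)).trace - ω * (Xᵀ * (X * Q)).trace
        + ω ^ 2 * (Xᵀ * (Q * (X * Q))).trace := by
  have h : (1 - ω • Q) * X * (1 - ω • Q)
      = X - ω • (Q * X) - ω • (X * Q) + (ω * ω) • (Q * (X * Q)) := by
    simp only [sub_mul, mul_sub, one_mul, mul_one, Matrix.smul_mul, Matrix.mul_smul,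
      smul_smul, mul_assoc]
    module
  rw [h]
  simp only [mul_sub, mul_add, Matrix.mul_smul, Matrix.trace_sub, Matrix.trace_add,
    Matrix.trace_smul, smul_eq_mul]
  ring

private lemma comm_trace {n : ℕ} (Q X : Matrix (Fin n) (Fin n) ℝ)
    (hQs : Qᵀ = Q) (hQp : Q * Q = Q) :
    ((Q * X - X * Q)ᵀ * (Q * X - X * Q)).trace
      = (Xᵀ * (Q * X)).trace + (Xᵀ * (X * Q)).trace
        - 2 * (Xᵀ * (Q * (X * Q))).trace := by
  have hDt : (Q * X - X * Q)ᵀ = Xᵀ * Q - Q * Xᵀ := by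
    simp [Matrix.transpose_sub, Matrix.transpose_mul, hQs]
  have e1 : (Xᵀ * Q) * (Q * X) = Xᵀ * (Q * X) := by
    rw [mul_assoc, ← mul_assoc Q Q X, hQp]
  have e2 : (Xᵀ * Q) * (X * Q) = Xᵀ * (Q * (X * Q)) := by rw [mul_assoc]
  have e3 : ((Q * Xᵀ) * (Q * X)).trace = (Xᵀ * (Q * (X * Q))).trace := by
    rw [mul_assoc, Matrix.trace_mul_comm, mul_assoc, mul_assoc]
  have e4 : ((Q * Xᵀ) * (X * Q)).trace = (Xᵀ * (X * Q)).trace := by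
    rw [mul_assoc, Matrix.trace_mul_comm, mul_assoc, mul_assoc, hQp]
  rw [hDt, sub_mul, mul_sub, mul_sub, e1, e2]
  rw [Matrix.trace_sub, Matrix.trace_sub, Matrix.trace_sub, e3, e4]
  ring

private lemma symm_trace {n : ℕ} (Q X Y : Matrix (Fin n) (Fin n) ℝ)
    (hQs : Qᵀ = Q) (ω : ℝ) :
    (((1 - ω • Q) * X * (1 - ω • Q))ᵀ * Y).trace
      = (Xᵀ * ((1 - ω • Q) * Y * (1 - ω • Q))).trace := by
  set S : Matrix (Fin n) (Fin n) ℝ := 1 - ω • Q with hS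
  have hSt : Sᵀ = S := by
    simp [hS, Matrix.transpose_sub, Matrix.transpose_smul, hQs]
  have h1 : (S * X * S)ᵀ = S * (Xᵀ * S) := by
    rw [Matrix.transpose_mul, Matrix.transpose_mul, hSt]
  rw [h1, mul_assoc, Matrix.trace_mul_comm]
  simp only [mul_assoc]

/-- The Frobenius inner product inequality, stated separately. -/
private lemma part1 {n m : ℕ} (P : Fin m → Matrix (Fin n) (Fin n) ℝ)
    (hPsym : ∀ i, (P i)ᵀ = P i) (hPproj : ∀ i, P i * P i = P i)
    (A : ℝ → Matrix (Fin n) (Fin n) ℝ → Matrix (Fin n) (Fin n) ℝ)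
    (hA : ∀ ω X, A ω X = (1 / (m : ℝ)) • ∑ i, (1 - ω • P i) * X * (1 - ω • P i))
    (t : ℝ) (ht0 : 0 ≤ t) :
    ∀ X : Matrix (Fin n) (Fin n) ℝ,
      (Xᵀ * A (1 + t) X).trace ≤ (Xᵀ * A (1 - t) X).trace := by
  intro X
  rw [hA, hA, Matrix.mul_smul, Matrix.mul_smul, Matrix.trace_smul, Matrix.trace_smul,
    Finset.mul_sum, Finset.mul_sum, Matrix.trace_sum, Matrix.trace_sum, smul_eq_mul, smul_eq_mul]
  refine mul_le_mul_of_nonneg_left ?_ (by positivity)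
  refine Finset.sum_le_sum fun i _ => ?_
  have h1 := expand_trace (P i) X (1 + t)
  have h2 := expand_trace (P i) X (1 - t)
  have h3 := comm_trace (P i) X (hPsym i) (hPproj i)
  have h4 := trace_tm_self_nonneg (P i * X - X * P i)
  nlinarith [mul_nonneg ht0 h4]

theorem stmt_5 {n m : ℕ} (hm : 0 < m)
    (P : Fin m → Matrix (Fin n) (Fin n) ℝ)
    (hPsym : ∀ i, (P i)ᵀ = P i) (hPproj : ∀ i, P i * P i = P i)
    (A : ℝ → Matrix (Fin n) (Fin n) ℝ → Matrix (Fin n) (Fin n) ℝ)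
    (hA : ∀ ω X, A ω X = (1 / (m : ℝ)) • ∑ i, (1 - ω • P i) * X * (1 - ω • P i))
    (t : ℝ) (ht : t ∈ Set.Icc (0 : ℝ) 1) :
    (∀ X : Matrix (Fin n) (Fin n) ℝ,
        (Xᵀ * A (1 + t) X).trace ≤ (Xᵀ * A (1 - t) X).trace) ∧
    (∀ l₁ l₂ : ℝ,
        IsGreatest {r : ℝ | ∃ X : Matrix (Fin n) (Fin n) ℝ, X ≠ 0 ∧ A (1 - t) X = r • X} l₁ →
        IsGreatest {r : ℝ | ∃ X : Matrix (Fin n) (Fin n) ℝ, X ≠ 0 ∧ A (1 + t) X = r • X} l₂ →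
        l₂ ≤ l₁) := by
  obtain ⟨ht0, ht1⟩ := ht
  have hpart1 := part1 P hPsym hPproj A hA t ht0
  refine ⟨hpart1, ?_⟩
  intro l₁ l₂ hg₁ hg₂
  classical
  obtain ⟨⟨X₂, hX₂ne, hX₂eig⟩, -⟩ := hg₂
  obtain ⟨-, hub₁⟩ := hg₁
  -- the identification of matrices with Euclidean space (Frobenius inner product)
  let e : Matrix (Fin n) (Fin n) ℝ ≃ₗ[ℝ] EuclideanSpace ℝ (Fin n × Fin n) :=
    { toFun := fun X => WithLp.toLp 2 (fun p : Fin n × Fin n => X p.1 p.2)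
      invFun := fun v => Matrix.of fun i j => v (i, j)
      map_add' := fun _ _ => rfl
      map_smul' := fun _ _ => rfl
      left_inv := fun _ => rfl
      right_inv := fun _ => rfl }
  have hinner : ∀ X Y : Matrix (Fin n) (Fin n) ℝ,
      (inner ℝ (e X) (e Y) : ℝ) = (Xᵀ * Y).trace := by
    intro X Y
    rw [Matrix.trace]
    simp only [PiLp.inner_apply, RCLike.inner_apply, starRingEnd_apply, star_trivial,
      Matrix.diag_apply, Matrix.mul_apply, Matrix.transpose_apply]
    rw [← Finset.univ_product_univ, Finset.sum_product]
    rw [Finset.sum_comm]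
    exact Finset.sum_congr rfl fun _ _ => Finset.sum_congr rfl fun _ _ => mul_comm _ _
  -- symmetry of A ω for the Frobenius inner product
  have hLsym : ∀ (ω : ℝ) (X Y : Matrix (Fin n) (Fin n) ℝ),
      ((A ω X)ᵀ * Y).trace = (Xᵀ * A ω Y).trace := by
    intro ω X Y
    rw [hA, hA, Matrix.transpose_smul, Matrix.smul_mul, Matrix.mul_smul,
      Matrix.trace_smul, Matrix.trace_smul]
    congr 1
    rw [Matrix.transpose_sum, Finset.sum_mul, Finset.mul_sum,
      Matrix.trace_sum, Matrix.trace_sum]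
    exact Finset.sum_congr rfl fun i _ => symm_trace (P i) X Y (hPsym i) ω
  -- A (1 - t) as a linear endomorphism
  let L₁ : Matrix (Fin n) (Fin n) ℝ →ₗ[ℝ] Matrix (Fin n) (Fin n) ℝ :=
    { toFun := A (1 - t)
      map_add' := by
        intro X Y
        simp only [hA, mul_add, add_mul, Finset.sum_add_distrib, smul_add]
      map_smul' := by
        intro c X
        simp only [hA, Matrix.mul_smul, Matrix.smul_mul, ← Finset.smul_sum,
          RingHom.id_apply]
        rw [smul_comm] }
  let T₁ : EuclideanSpace ℝ (Fin n × Fin n) →ₗ[ℝ] EuclideanSpace ℝ (Fin n × Fin n) :=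
    e.toLinearMap ∘ₗ L₁ ∘ₗ e.symm.toLinearMap
  have hT₁ : ∀ v, T₁ v = e (A (1 - t) (e.symm v)) := fun _ => rfl
  have hsym : T₁.IsSymmetric := by
    intro x y
    have hx := e.apply_symm_apply x
    have hy := e.apply_symm_apply y
    calc (inner ℝ (T₁ x) y : ℝ)
        = (inner ℝ (e (A (1 - t) (e.symm x))) (e (e.symm y)) : ℝ) := by rw [hT₁, hy]
      _ = ((A (1 - t) (e.symm x))ᵀ * (e.symm y)).trace := hinner _ _
      _ = ((e.symm x)ᵀ * A (1 - t) (e.symm y)).trace := hLsym _ _ _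
      _ = (inner ℝ (e (e.symm x)) (e (A (1 - t) (e.symm y))) : ℝ) := (hinner _ _).symm
      _ = (inner ℝ x (T₁ y) : ℝ) := by rw [hT₁, hx]
  have hvne : e X₂ ≠ 0 := by
    intro h
    apply hX₂ne
    have := congrArg e.symm h
    simpa using this
  haveI : Nontrivial (EuclideanSpace ℝ (Fin n × Fin n)) := ⟨⟨e X₂, 0, hvne⟩⟩
  have hev := hsym.hasEigenvalue_iSup_of_finiteDimensional
  set μ : ℝ := ⨆ x : { x : EuclideanSpace ℝ (Fin n × Fin n) // x ≠ 0 },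
      RCLike.re (inner ℝ (T₁ x) x : ℝ) / ‖(x : EuclideanSpace ℝ (Fin n × Fin n))‖ ^ 2 with hμ
  -- μ is an eigenvalue of A (1 - t), hence μ ≤ l₁
  obtain ⟨w, hw⟩ := hev.exists_hasEigenvector
  have hwX : A (1 - t) (e.symm w) = μ • e.symm w := by
    have h1 : T₁ w = μ • w := hw.apply_eq_smul
    have h2 : e (A (1 - t) (e.symm w)) = μ • w := by rw [← hT₁, h1]
    have := congrArg e.symm h2
    simpa using this
  have hwne : e.symm w ≠ 0 := by
    intro h
    apply hw.2
    have := congrArg e h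
    simpa using this
  have hμl₁ : μ ≤ l₁ := hub₁ ⟨e.symm w, hwne, hwX⟩
  -- l₂ is at most the Rayleigh quotient of T₁ at e X₂, which is at most μ
  have hnv : (0 : ℝ) < ‖e X₂‖ ^ 2 := by
    have := norm_pos_iff.mpr hvne
    positivity
  have hTv : (inner ℝ (T₁ (e X₂)) (e X₂) : ℝ) = (X₂ᵀ * A (1 - t) X₂).trace := by
    rw [hT₁]
    have h1 : e.symm (e X₂) = X₂ := e.symm_apply_apply X₂
    rw [h1, hinner]
    exact hLsym _ _ _
  have hn2 : ‖e X₂‖ ^ 2 = (X₂ᵀ * X₂).trace := by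
    rw [← real_inner_self_eq_norm_sq, hinner]
  have hkey : l₂ * ‖e X₂‖ ^ 2 ≤ (inner ℝ (T₁ (e X₂)) (e X₂) : ℝ) := by
    rw [hTv, hn2]
    have h1 : (X₂ᵀ * A (1 + t) X₂).trace = l₂ * (X₂ᵀ * X₂).trace := by
      rw [hX₂eig, Matrix.mul_smul, Matrix.trace_smul, smul_eq_mul]
    have h2 := hpart1 X₂
    linarith
  -- bounded above: the Rayleigh quotient is bounded by the operator norm
  have hbdd : BddAbove (Set.range fun x : { x : EuclideanSpace ℝ (Fin n × Fin n) // x ≠ 0 } =>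
      RCLike.re (inner ℝ (T₁ x) x : ℝ) / ‖(x : EuclideanSpace ℝ (Fin n × Fin n))‖ ^ 2) := by
    refine ⟨‖LinearMap.toContinuousLinearMap T₁‖, ?_⟩
    rintro r ⟨x, rfl⟩
    have hxn : (0 : ℝ) < ‖(x : EuclideanSpace ℝ (Fin n × Fin n))‖ ^ 2 := by
      have := norm_pos_iff.mpr x.2
      positivity
    rw [div_le_iff₀ hxn]
    have h1 : (inner ℝ (T₁ x) x : ℝ) ≤ ‖T₁ x‖ * ‖(x : EuclideanSpace ℝ (Fin n × Fin n))‖ :=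
      real_inner_le_norm _ _
    have h2 : ‖T₁ (x : EuclideanSpace ℝ (Fin n × Fin n))‖ ≤
        ‖LinearMap.toContinuousLinearMap T₁‖ * ‖(x : EuclideanSpace ℝ (Fin n × Fin n))‖ :=
      (LinearMap.toContinuousLinearMap T₁).le_opNorm _
    have h3 : (0 : ℝ) ≤ ‖(x : EuclideanSpace ℝ (Fin n × Fin n))‖ := norm_nonneg _
    simp only [RCLike.re_to_real]
    nlinarith
  have hl₂μ : l₂ ≤ μ := by
    have hle := le_ciSup hbdd (⟨e X₂, hvne⟩ :
      { x : EuclideanSpace ℝ (Fin n × Fin n) // x ≠ 0 })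
    refine le_trans ?_ hle
    simp only [RCLike.re_to_real]
    rw [le_div_iff₀ hnv]
    exact hkey
  linarith
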